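/- Let u and v be two absolutely semisimple elements of a unital associative k-algebra A such that uv = vu. Then the unital subalgebra k[u, v] of A generated by u and v contains no nonzero nilpotent element. -/

import Mathlib

open Polynomial

/-- An element of a `k`-algebra is absolutely semisimple if it has a separable
annihilating polynomial. -/
def AbsSemisimple (k : Type*) [Field k] {A : Type*} [Ring A] [Algebra k A] (u : A) : Prop :=
  ∃ f : k[X], f.Separable ∧ aeval u f = 0

theorem no_nonzero_nilpotent_in_adjoin_of_commuting_absSemisimple
    {k : Type*} [Field k] {A : Type*} [Ring A] [Algebra k A]
    (u v : A) (hu : AbsSemisimple k u) (hv : AbsSemisimple k v)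
    (huv : u * v = v * u) :
    ∀ w ∈ Algebra.adjoin k ({u, v} : Set A), IsNilpotent w → w = 0 := by
  obtain ⟨f, hf, hfu⟩ := hu
  obtain ⟨g₀, hg₀, hg₀v⟩ := hv
  have comm : Commute u v := huv
  -- monicize g
  have hg₀0 : g₀ ≠ 0 := hg₀.squarefree.ne_zero
  set g : k[X] := g₀ * C (g₀.leadingCoeff)⁻¹ with hgdef
  have hgmonic : g.Monic := monic_mul_leadingCoeff_inv hg₀0
  have hg : g.Separable :=
    hg₀.mul_unit (isUnit_C.mpr (isUnit_iff_ne_zero.mpr (inv_ne_zero (leadingCoeff_ne_zero.mpr hg₀0))))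
  have hgv : aeval v g = 0 := by rw [hgdef, map_mul, hg₀v, zero_mul]
  have hfsq : Squarefree f := hf.squarefree
  let R := k[X] ⧸ Ideal.span {f}
  let S := AdjoinRoot (g.map <| algebraMap k R)
  have : Module.Finite k R := (AdjoinRoot.powerBasis hfsq.ne_zero).finite
  have : IsArtinianRing R := .of_finite k R
  have : IsReduced R :=
    (Ideal.isRadical_iff_quotient_reduced _).mp (isRadical_iff_span_singleton.mp hfsq.isRadical)
  have : IsReduced S := by
    exact (Ideal.isRadical_iff_quotient_reduced _).mp
      (isRadical_iff_span_singleton.mp (hg.map (f := algebraMap k R)).squarefree.isRadical)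
  have : Module.Finite R S := (AdjoinRoot.powerBasis' (hgmonic.map _)).finite
  set_option maxSynthPendingDepth 2 in
  have : IsScalarTower k R S := .of_algebraMap_eq fun _ ↦ rfl
  have : Module.Finite k S := .trans R S
  have : IsArtinianRing S := .of_finite k S
  have : IsSemisimpleRing S := IsArtinianRing.isSemisimpleRing_of_isReduced S
  let φ : S →ₐ[k] A := Ideal.Quotient.liftₐ _ (eval₂AlgHom (Ideal.Quotient.liftₐ _ (aeval u)
    fun a ↦ ?_) v ?_) ((Ideal.span_singleton_le_iff_mem _).mpr ?_ : _ ≤ RingHom.ker _)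
  rotate_left 1
  · intro ha
    obtain ⟨c, rfl⟩ := Ideal.mem_span_singleton.mp ha
    rw [map_mul, hfu, zero_mul]
  · have hcomm : ∀ p : k[X], Commute (aeval u p) v := fun p ↦
      p.induction_on (fun c ↦ by simpa using Algebra.commute_algebraMap_left c v)
        (fun p q hp hq ↦ by simpa only [map_add] using hp.add_left hq)
        fun n c h ↦ by
          simpa only [pow_succ, ← mul_assoc, map_mul, aeval_X] using h.mul_left comm
    rintro ⟨p⟩; exact hcomm p
  · simpa only [RingHom.mem_ker, eval₂AlgHom_apply, eval₂_map, AlgHom.comp_algebraMap_of_tower]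
      using (aeval_def v g).symm.trans hgv
  have hrange : Algebra.adjoin k {u, v} ≤ φ.range := Algebra.adjoin_le fun x ↦ by
    rintro (hx | hx) <;> rw [hx]
    · exact ⟨AdjoinRoot.of _ (AdjoinRoot.root _), (eval₂_C _ _).trans (aeval_X u)⟩
    · exact ⟨AdjoinRoot.root _, eval₂_X _ _⟩
  intro w hw hnil
  obtain ⟨p, rfl⟩ := (AlgHom.mem_range _).mp (hrange hw)
  obtain ⟨n, hn⟩ := hnil
  have hker : (RingHom.ker φ.toRingHom).IsRadical := by
    have h := IsSemisimpleModule.annihilator_isRadical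
      (M := S ⧸ RingHom.ker φ.toRingHom) S
    rwa [Ideal.annihilator_quotient] at h
  have hp : p ∈ RingHom.ker φ.toRingHom := by
    refine hker ⟨n, ?_⟩
    rw [RingHom.mem_ker]
    simpa [map_pow] using hn
  simpa [RingHom.mem_ker] using hp
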